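/- Let G = (V,E) be a directed graph with m edges and c an interval function of width at most w, and suppose a c-respecting Eulerian trail exists. Then for each time step t ∈ [1,m], the number of distinct sets S ⊆ E(t) for which there exists a c-respecting Eulerian trail P = e₁…e_m with S = { e_i : i ∈ [1,t], e_i ∈ E(t) } is at most C(2w-1, w), where C denotes the binomial coefficient. -/

import Mathlib

open Finset

/-- An edge `e` (with interval `c e = [ (c e).1, (c e).2 ]`) is available at time `t`. -/
def Available {E : Type*} (c : E → ℕ × ℕ) (e : E) (t : ℕ) : Prop :=
  (c e).1 ≤ t ∧ t ≤ (c e).2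

/-- A `c`-respecting Eulerian trail. -/
def IsRespectingEulerTrail {V E : Type*} {m : ℕ} (head tail : E → V)
    (c : E → ℕ × ℕ) (π : Fin m ≃ E) : Prop :=
  (∀ i : Fin m, ∀ h : i.val + 1 < m, head (π i) = tail (π ⟨i.val + 1, h⟩)) ∧
  (∀ i : Fin m, Available c (π i) (i.val + 1))

open Classical in
theorem stmt_10 {V E : Type*} [Fintype E] (head tail : E → V)
    (c : E → ℕ × ℕ) (w : ℕ) (m : ℕ) (hm : m = Fintype.card E)
    (hsub : ∀ e, 1 ≤ (c e).1 ∧ (c e).2 ≤ m)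
    (hwidth : ∀ e, (c e).2 + 1 ≤ (c e).1 + w)
    (hex : ∃ π : Fin m ≃ E, IsRespectingEulerTrail head tail c π)
    (t : ℕ) (ht : 1 ≤ t) (htm : t ≤ m) :
    ((Finset.univ : Finset (Finset E)).filter
        (fun S => ∃ π : Fin m ≃ E, IsRespectingEulerTrail head tail c π ∧
          S = Finset.univ.filter
                (fun e => (π.symm e).val + 1 ≤ t ∧ Available c e t))).card
      ≤ (2 * w - 1).choose w := by
  classical
  obtain ⟨π₀, hπ₀⟩ := hex
  have hm1 : 1 ≤ m := le_trans ht htm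
  have key : ∀ π : Fin m ≃ E, IsRespectingEulerTrail head tail c π → ∀ e : E,
      (c e).1 ≤ (π.symm e).val + 1 ∧ (π.symm e).val + 1 ≤ (c e).2 := by
    intro π hπ e
    have h := hπ.2 (π.symm e)
    rw [Equiv.apply_symm_apply] at h
    exact h
  have hw : 1 ≤ w := by
    by_contra hw
    have h := key π₀ hπ₀ (π₀ ⟨0, hm1⟩)
    have h2 := hwidth (π₀ ⟨0, hm1⟩)
    omega
  set A : Finset E := univ.filter (fun e => Available c e t) with hA
  set a : ℕ := (univ.filter (fun e => (c e).2 < t)).card with ha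
  -- cardinality of the past-edge set
  have hIcard : ∀ π : Fin m ≃ E, (univ.filter fun e : E => (π.symm e).val + 1 ≤ t).card = t := by
    intro π
    have h1 : (univ.filter fun e : E => (π.symm e).val + 1 ≤ t)
        = Finset.image π (univ.filter fun i : Fin m => i.val + 1 ≤ t) := by
      ext e
      simp only [mem_filter, mem_univ, true_and, Finset.mem_image]
      constructor
      · intro h; exact ⟨π.symm e, h, π.apply_symm_apply e⟩
      · rintro ⟨i, hi, rfl⟩; rwa [Equiv.symm_apply_apply]
    rw [h1, Finset.card_image_of_injective _ π.injective]
    have h2 : Finset.image Fin.val (univ.filter fun i : Fin m => i.val + 1 ≤ t)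
        = Finset.range t := by
      ext n
      simp only [Finset.mem_image, mem_filter, mem_univ, true_and, Finset.mem_range]
      constructor
      · rintro ⟨i, hi, rfl⟩; omega
      · intro hn
        refine ⟨⟨n, by omega⟩, ?_, rfl⟩
        show n + 1 ≤ t
        omega
    have h3 := Finset.card_image_of_injective
      (univ.filter fun i : Fin m => i.val + 1 ≤ t) Fin.val_injective
    rw [h2, Finset.card_range] at h3
    omega
  have hScard : ∀ π : Fin m ≃ E, IsRespectingEulerTrail head tail c π →
      (univ.filter (fun e => (π.symm e).val + 1 ≤ t ∧ Available c e t)).card = t - a := by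
    intro π hπ
    have hsplit : (univ.filter (fun e : E => (π.symm e).val + 1 ≤ t ∧ Available c e t))
        = (univ.filter fun e : E => (π.symm e).val + 1 ≤ t).filter
            (fun e => ¬ (c e).2 < t) := by
      ext e
      have hk := key π hπ e
      rw [mem_filter, mem_filter]
      simp only [mem_filter, mem_univ, true_and, Available]
      omega
    have hexp : (univ.filter fun e : E => (c e).2 < t)
        = (univ.filter fun e : E => (π.symm e).val + 1 ≤ t).filter
            (fun e => (c e).2 < t) := by
      ext e
      have hk := key π hπ e
      simp only [mem_filter, mem_univ, true_and]
      omega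
    have hadd := Finset.card_filter_add_card_filter_not
      (s := univ.filter fun e : E => (π.symm e).val + 1 ≤ t)
      (p := fun e => (c e).2 < t)
    rw [hsplit]
    rw [hIcard π] at hadd
    rw [ha, hexp]
    omega
  -- bound on |E(t)|
  have hAcard : A.card ≤ 2 * w - 1 := by
    have hinj : Set.InjOn (fun e : E => (π₀.symm e).val) A := by
      intro e₁ _ e₂ _ h
      exact π₀.symm.injective (Fin.val_injective h)
    have hle : A.card ≤ (Finset.Icc (t - w) (t + w - 2)).card := by
      apply Finset.card_le_card_of_injOn (fun e => (π₀.symm e).val) _ hinj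
      intro e he
      rw [Finset.mem_coe, hA, mem_filter] at he
      simp only [hA, mem_filter, mem_univ, true_and, Available] at he
      have hk := key π₀ hπ₀ e
      have hw' := hwidth e
      simp only [Finset.mem_coe, Finset.mem_Icc]
      omega
    rw [Nat.card_Icc] at hle
    omega
  -- main chain
  have hsubset : ((Finset.univ : Finset (Finset E)).filter
        (fun S => ∃ π : Fin m ≃ E, IsRespectingEulerTrail head tail c π ∧
          S = Finset.univ.filter
                (fun e => (π.symm e).val + 1 ≤ t ∧ Available c e t)))
      ⊆ A.powersetCard (t - a) := by
    intro S hS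
    simp only [mem_filter, mem_univ, true_and] at hS
    obtain ⟨π, hπ, rfl⟩ := hS
    rw [Finset.mem_powersetCard]
    constructor
    · intro e he
      simp only [mem_filter, mem_univ, true_and] at he
      simp only [hA, mem_filter, mem_univ, true_and]
      exact he.2
    · exact hScard π hπ
  calc ((Finset.univ : Finset (Finset E)).filter _).card
      ≤ (A.powersetCard (t - a)).card := Finset.card_le_card hsubset
    _ = A.card.choose (t - a) := Finset.card_powersetCard _ _
    _ ≤ (2 * w - 1).choose (t - a) := Nat.choose_le_choose _ hAcard
    _ ≤ (2 * w - 1).choose ((2 * w - 1) / 2) := Nat.choose_le_middle _ _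
    _ = (2 * w - 1).choose w := by
        have h1 : (2 * w - 1) / 2 = w - 1 := by omega
        have h2 := Nat.choose_symm (n := 2 * w - 1) (k := w) (by omega)
        rw [h1]
        rw [show 2 * w - 1 - w = w - 1 by omega] at h2
        omega
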